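/- Let φ : ℝ → ℝ be defined by φ(w) = max(0, 2w) − max(0, 4w − 2), and let φ^j denote its j-fold composition. For every integer j ≥ 1 and every z ∈ [0,1) such that 2^j·z is not an integer: ⌊2^j·z⌋ is odd if and only if φ^j(z − 2^{−j−1}) ≥ 1/2. (That is, the sawtooth function φ^j, shifted by 2^{−j−1} and thresholded at 1/2, extracts the j-th binary digit of z.) -/

import Mathlib

noncomputable section

/-- Telgarsky's tent map `φ(w) = max(0, 2w) − max(0, 4w − 2)`. -/
def phi (w : ℝ) : ℝ := max 0 (2 * w) - max 0 (4 * w - 2)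

lemma phi_eq {x : ℝ} (h0 : 0 ≤ x) (h1 : x ≤ 1) : phi x = min (2*x) (2-2*x) := by
  unfold phi
  rcases le_total x (1/2) with h | h
  · rw [max_eq_right (by linarith), max_eq_left (by linarith), min_eq_left (by linarith)]
    ring
  · rw [max_eq_right (by linarith), max_eq_right (by linarith), min_eq_right (by linarith)]
    ring

lemma phi_nonpos {x : ℝ} (h : x ≤ 0) : phi x = 0 := by
  unfold phi
  rw [max_eq_left (by linarith), max_eq_left (by linarith)]
  ring

lemma phi_iter_zero (n : ℕ) : phi^[n] (0:ℝ) = 0 := by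
  induction n with
  | zero => simp
  | succ n ih => rw [Function.iterate_succ_apply', ih, phi_nonpos le_rfl]

lemma phi_iter_eq (m : ℕ) : ∀ x : ℝ, 0 ≤ x → x ≤ 1 →
    phi^[m+1] x = min (2 * Int.fract (2^m * x)) (2 - 2 * Int.fract (2^m * x)) := by
  induction m with
  | zero =>
    intro x h0 h1
    rcases eq_or_lt_of_le h1 with rfl | h1
    · norm_num [phi_eq h0 le_rfl]
    · rw [Function.iterate_one, phi_eq h0 h1.le, pow_zero, one_mul,
        Int.fract_eq_self.2 ⟨h0, h1⟩]
  | succ m ih =>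
    intro x h0 h1
    rw [Function.iterate_succ_apply', ih x h0 h1]
    have key : Int.fract ((2:ℝ)^(m+1) * x) = Int.fract (2 * Int.fract ((2:ℝ)^m * x)) := by
      have h2 : (2:ℝ)^(m+1) * x = ((2 * ⌊(2:ℝ)^m * x⌋ : ℤ) : ℝ) + 2 * Int.fract ((2:ℝ)^m * x) := by
        rw [Int.fract]
        push_cast
        ring
      rw [h2, Int.fract_intCast_add]
    set f := Int.fract ((2:ℝ)^m * x) with hf
    have hf0 : 0 ≤ f := Int.fract_nonneg _
    have hf1 : f < 1 := Int.fract_lt_one _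
    rcases lt_or_ge f (1/2) with h | h
    · have hmin : min (2*f) (2-2*f) = 2*f := min_eq_left (by linarith)
      have hfr : Int.fract (2*f) = 2*f := Int.fract_eq_self.2 ⟨by linarith, by linarith⟩
      rw [hmin, phi_eq (by linarith) (by linarith), key, hfr]
    · have hmin : min (2*f) (2-2*f) = 2-2*f := min_eq_right (by linarith)
      have hfr : Int.fract (2*f) = 2*f - 1 := by
        have h3 : Int.fract (2*f) = Int.fract (2*f - 1) := by
          rw [show 2*f-1 = 2*f + ((-1:ℤ):ℝ) by push_cast; ring, Int.fract_add_intCast]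
        rw [h3, Int.fract_eq_self.2 ⟨by linarith, by linarith⟩]
      rw [hmin, phi_eq (by linarith) (by linarith), key, hfr, min_comm]
      congr 1 <;> ring

/-- for every integer `j ≥ 1` and every `z ∈ [0,1)` such that `2^j·z` is
not an integer, `⌊2^j·z⌋` is odd if and only if `φ^j(z − 2^{−j−1}) ≥ 1/2`, where `φ^j`
is the `j`-fold composition of `φ`. -/
theorem sawtooth_extracts_binary_digit (j : ℕ) (hj : 1 ≤ j) (z : ℝ)
    (hz0 : 0 ≤ z) (hz1 : z < 1)
    (hnotint : ∀ m : ℤ, (m : ℝ) ≠ 2 ^ j * z) :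
    Odd ⌊(2:ℝ) ^ j * z⌋ ↔ 1/2 ≤ phi^[j] (z - 1 / 2 ^ (j + 1)) := by
  obtain ⟨k, rfl⟩ : ∃ k, j = k + 1 := ⟨j - 1, (Nat.succ_pred_eq_of_pos hj).symm⟩
  set x : ℝ := z - 1 / 2 ^ (k + 1 + 1) with hx
  have hpow : (0:ℝ) < 2 ^ (k+1+1) := by positivity
  rcases lt_or_ge x 0 with hxneg | hx0
  · -- z < 2^{-(j+1)}: iterate is 0, floor is 0
    have hzsmall : z < 1 / 2 ^ (k+1+1) := by rw [hx] at hxneg; linarith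
    have hflr : ⌊(2:ℝ) ^ (k+1) * z⌋ = 0 := by
      apply Int.floor_eq_zero_iff.2
      constructor
      · positivity
      · have h2 : (2:ℝ)^(k+1) * z < 2^(k+1) * (1 / 2^(k+1+1)) := by
          apply mul_lt_mul_of_pos_left hzsmall (by positivity)
        have h3 : (2:ℝ)^(k+1) * (1 / 2^(k+1+1)) = 1/2 := by
          rw [pow_succ]
          field_simp
          ring
        rw [h3] at h2
        linarith
    have hiter : phi^[k+1] x = 0 := by
      rw [Function.iterate_succ_apply, phi_nonpos hxneg.le, phi_iter_zero]
    rw [hflr, hiter]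
    simp [Int.odd_iff]
  · -- main case
    have hx1 : x ≤ 1 := by
      have : 0 < 1 / (2:ℝ)^(k+1+1) := by positivity
      rw [hx]; linarith
    rw [phi_iter_eq k x hx0 hx1]
    set y : ℝ := 2 ^ (k+1) * z with hy
    have hkx : (2:ℝ)^k * x = y/2 - 1/4 := by
      rw [hx, hy]
      have h4 : (2:ℝ)^(k+1) = 2^k * 2 := by ring
      have h5 : (2:ℝ)^(k+1+1) = 2^k * 4 := by ring
      rw [h4, h5]
      have hk0 : (0:ℝ) < 2^k := by positivity
      field_simp
    set n : ℤ := ⌊y⌋ with hn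
    set t : ℝ := Int.fract y with ht
    have hyt : y = (n:ℝ) + t := by rw [hn, ht]; exact (Int.floor_add_fract y).symm
    have ht1 : t < 1 := Int.fract_lt_one y
    have ht0 : 0 < t := by
      rcases lt_or_eq_of_le (Int.fract_nonneg y) with h | h
      · exact h
      · exact absurd (show (n:ℝ) = y by rw [hyt, ht, ← h, add_zero]) (hnotint n)
    rcases Int.even_or_odd n with ⟨c, hc⟩ | ⟨c, hc⟩
    · -- n even: both sides false
      have hne : ¬ Odd n := by
        rw [Int.not_even_iff_odd.symm]
        simp [hc, Even.add_self]
      have hfr : (2:ℝ)^k * x = (c:ℝ) + (t/2 - 1/4) := by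
        rw [hkx, hyt, hc]; push_cast; ring
      apply iff_of_false hne
      rcases le_or_gt (1/2) t with h | h
      · have : Int.fract ((2:ℝ)^k * x) = t/2 - 1/4 := by
          rw [hfr, Int.fract_intCast_add, Int.fract_eq_self.2 ⟨by linarith, by linarith⟩]
        rw [this]
        intro hcon
        have := min_le_left (2 * (t/2 - 1/4)) (2 - 2 * (t/2 - 1/4))
        linarith
      · have : Int.fract ((2:ℝ)^k * x) = t/2 + 3/4 := by
          have h6 : (2:ℝ)^k * x = ((c - 1 : ℤ):ℝ) + (t/2 + 3/4) := by
            rw [hfr]; push_cast; ring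
          rw [h6, Int.fract_intCast_add, Int.fract_eq_self.2 ⟨by linarith, by linarith⟩]
        rw [this]
        intro hcon
        have := min_le_right (2 * (t/2 + 3/4)) (2 - 2 * (t/2 + 3/4))
        linarith
    · -- n odd: both sides true
      have hfr : Int.fract ((2:ℝ)^k * x) = t/2 + 1/4 := by
        have h6 : (2:ℝ)^k * x = ((c:ℤ):ℝ) + (t/2 + 1/4) := by
          rw [hkx, hyt, hc]; push_cast; ring
        rw [h6, Int.fract_intCast_add, Int.fract_eq_self.2 ⟨by linarith, by linarith⟩]
      exact iff_of_true ⟨c, hc⟩ (by rw [hfr]; apply le_min <;> linarith)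

end
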